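/- Let p ∈ [1,∞], let ρ : ℝ → ℝ be normalized Lipschitz, let W : I² → ℝ be measurable with |W| ≤ 1 a.e., and let (h_{fgk})_{f,g ∈ {1,…,F}, k ∈ {0,…,K−1}} be real coefficients with |h_{fgk}| ≤ h̄ for all f,g,k. For X = (X_g)_{g=1}^F with X_g ∈ L^p(I), define Y = (Y_f)_{f=1}^F by Y_f := ρ( Σ_{g=1}^F Σ_{k=0}^{K−1} h_{fgk} T_W^k X_g ) (ρ applied pointwise). Then ‖Y‖_{L^p(I;ℝ^F)} ≤ F K h̄ ‖X‖_{L^p(I;ℝ^F)}. -/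

import Mathlib

open MeasureTheory Filter Set
open scoped ENNReal NNReal

noncomputable section

/-- Lebesgue measure restricted to the unit interval `I = [0,1]`. -/
def μI : Measure ℝ := volume.restrict (Set.Icc (0:ℝ) 1)

/-- Lebesgue measure restricted to the unit square `I² = [0,1]²`. -/
def μI2 : Measure (ℝ × ℝ) := volume.restrict ((Set.Icc (0:ℝ) 1) ×ˢ (Set.Icc (0:ℝ) 1))

/-- The graphon integral operator `(T_W x)(v) = ∫_I W(u,v) x(u) du`. -/
def graphonOp (W : ℝ → ℝ → ℝ) (x : ℝ → ℝ) : ℝ → ℝ :=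
  fun v => ∫ u in Set.Icc (0:ℝ) 1, W u v * x u

/-- `k`-fold composition `T_W^k` (identity for `k = 0`). -/
def graphonIter (W : ℝ → ℝ → ℝ) (k : ℕ) (x : ℝ → ℝ) : ℝ → ℝ :=
  (graphonOp W)^[k] x

/-- `ρ` is normalized Lipschitz: `|ρ x − ρ y| ≤ |x − y|` and `ρ 0 = 0`. -/
def NormalizedLipschitz (ρ : ℝ → ℝ) : Prop :=
  (∀ x y : ℝ, |ρ x - ρ y| ≤ |x - y|) ∧ ρ 0 = 0

/-- One layer of a graphon neural network. -/
def gnnLayer (F K : ℕ) (W : ℝ → ℝ → ℝ) (ρ : ℝ → ℝ)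
    (h : Fin F → Fin F → Fin K → ℝ) (X : Fin F → ℝ → ℝ) : Fin F → ℝ → ℝ :=
  fun f u => ρ (∑ g : Fin F, ∑ k : Fin K, h f g k * graphonIter W (k : ℕ) (X g) u)

/-- The `L`-layer graphon neural network `Φ(W; X; h)`. -/
def gnn (F K L : ℕ) (W : ℝ → ℝ → ℝ) (ρ : ℝ → ℝ)
    (h : Fin L → Fin F → Fin F → Fin K → ℝ) (X : Fin F → ℝ → ℝ) : Fin F → ℝ → ℝ :=
  (List.ofFn h).foldl (fun Y hl => gnnLayer F K W ρ hl Y) X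

/-- The mixed norm `‖X‖_{L^p(I;ℝ^F)} = (∑_f ‖X_f‖_{L^p(I)}²)^{1/2}`. -/
def vecLpNorm (F : ℕ) (p : ℝ≥0∞) (X : Fin F → ℝ → ℝ) : ℝ :=
  Real.sqrt (∑ f : Fin F, ((eLpNorm (X f) p μI).toReal) ^ 2)

/-- `X : ℝ → L^∞(I;ℝ^F)` is, on `[0,T]`, a continuously differentiable solution of the
Graphon-NDE `dX/dt(t) = Φ(W; X(t); H(t))`, `X(0) = Z`, in the Banach space `L^∞(I;ℝ^F)`. -/
def IsGNDESolution (F K L : ℕ) (T : ℝ) (W : ℝ → ℝ → ℝ) (ρ : ℝ → ℝ)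
    (H : ℝ → Fin L → Fin F → Fin F → Fin K → ℝ) (Z : Fin F → ℝ → ℝ)
    (X : ℝ → Fin F → Lp ℝ ⊤ μI) : Prop :=
  (∀ f, (X 0 f : ℝ → ℝ) =ᵐ[μI] Z f) ∧
  ∃ X' : ℝ → Fin F → Lp ℝ ⊤ μI,
    ContinuousOn X' (Set.Icc 0 T) ∧
    ∀ t ∈ Set.Icc (0:ℝ) T,
      HasDerivWithinAt X (X' t) (Set.Icc 0 T) t ∧
      ∀ f, (X' t f : ℝ → ℝ) =ᵐ[μI]
        gnn F K L W ρ (H t) (fun g => (X t g : ℝ → ℝ)) f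

/-- Operator norm (from `L²(I)` to `L²(I)`) of the difference `T_W − T_{W'}`. -/
def graphonOpNormSub (W W' : ℝ → ℝ → ℝ) : ℝ :=
  ⨆ x : {x : ℝ → ℝ // MemLp x 2 μI ∧ eLpNorm x 2 μI ≤ 1},
    (eLpNorm (fun v => graphonOp W x v - graphonOp W' x v) 2 μI).toReal

/-- Left endpoint `u_i = (i−1)/n` of the cell `I_i` containing `u`. -/
def stepPt (n : ℕ) (u : ℝ) : ℝ := (⌊(n : ℝ) * u⌋ : ℝ) / n

/-- Sampled step kernel: `Wₙ(u,v) = W(u_i,u_j)` for `(u,v) ∈ I_i × I_j`. -/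
def sampKernel (W : ℝ → ℝ → ℝ) (n : ℕ) : ℝ → ℝ → ℝ :=
  fun u v => W (stepPt n u) (stepPt n v)

/-- Sampled step datum: `Zₙ(u) = Z(u_i)` for `u ∈ I_i`. -/
def sampDatum (F : ℕ) (Z : Fin F → ℝ → ℝ) (n : ℕ) : Fin F → ℝ → ℝ :=
  fun f u => Z f (stepPt n u)

/-- Support `W⁺ = {(u,v) ∈ I² : W(u,v) = 1}`. -/
def supportSet (W : ℝ → ℝ → ℝ) : Set (ℝ × ℝ) :=
  {p : ℝ × ℝ | p.1 ∈ Set.Icc (0:ℝ) 1 ∧ p.2 ∈ Set.Icc (0:ℝ) 1 ∧ W p.1 p.2 = 1}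

/-- The cell `I_i = [u_i, u_i + 1/n)` containing `u`. -/
def cell (n : ℕ) (u : ℝ) : Set ℝ := Set.Ico (stepPt n u) (stepPt n u + 1 / n)

open scoped Classical in
/-- Cell-intersection step kernel: `Wₙ = 1` on `I_i × I_j` iff `(I_i × I_j) ∩ W⁺ ≠ ∅`. -/
def interKernel (W : ℝ → ℝ → ℝ) (n : ℕ) : ℝ → ℝ → ℝ :=
  fun u v => if ((cell n u ×ˢ cell n v) ∩ supportSet W).Nonempty then 1 else 0

/-- Cell-average step datum: `Zₙ(u) = n ∫_{I_i} Z(v) dv` for `u ∈ I_i`. -/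
def cellAvg (F : ℕ) (Z : Fin F → ℝ → ℝ) (n : ℕ) : Fin F → ℝ → ℝ :=
  fun f u => (n : ℝ) * ∫ v in cell n u, Z f v

/-- Number of closed `δ`-mesh squares `[iδ,(i+1)δ] × [jδ,(j+1)δ]`, `i,j ∈ ℤ`, meeting `Ω`. -/
def meshCount (δ : ℝ) (Ω : Set (ℝ × ℝ)) : ℕ :=
  Set.ncard {p : ℤ × ℤ |
    ((Set.Icc ((p.1 : ℝ) * δ) (((p.1 : ℝ) + 1) * δ) ×ˢ
      Set.Icc ((p.2 : ℝ) * δ) (((p.2 : ℝ) + 1) * δ)) ∩ Ω).Nonempty}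

/-- Upper box-counting dimension `limsup_{δ→0⁺} log N_δ(Ω) / (−log δ)`. -/
def upperBoxDim (Ω : Set (ℝ × ℝ)) : ℝ :=
  Filter.limsup (fun δ : ℝ => Real.log (meshCount δ Ω) / (-Real.log δ))
    (nhdsWithin 0 (Set.Ioi 0))

end
noncomputable section AuxGNN

open MeasureTheory

instance : IsProbabilityMeasure μI :=
  ⟨by simp [μI, Real.volume_Icc]⟩

lemma μI2_eq_prod : μI2 = μI.prod μI := by
  rw [μI2, μI, MeasureTheory.Measure.volume_eq_prod, Measure.prod_restrict]

lemma graphonOp_eq (W : ℝ → ℝ → ℝ) (x : ℝ → ℝ) (v : ℝ) :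
    graphonOp W x v = ∫ u, W u v * x u ∂μI := rfl

lemma graphonOp_aesm {W : ℝ → ℝ → ℝ} (hWm : Measurable (Function.uncurry W))
    {x : ℝ → ℝ} (hx : AEStronglyMeasurable x μI) :
    AEStronglyMeasurable (graphonOp W x) μI := by
  have hsnd : AEStronglyMeasurable (fun q : ℝ × ℝ => x q.2) (μI.prod μI) := by
    refine hx.comp_quasiMeasurePreserving Measure.quasiMeasurePreserving_snd
  have h1 : AEStronglyMeasurable (fun q : ℝ × ℝ => W q.2 q.1 * x q.2) (μI.prod μI) :=
    ((hWm.comp measurable_swap).aestronglyMeasurable).mul hsnd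
  exact h1.integral_prod_right'

lemma graphonOp_ae_bound {W : ℝ → ℝ → ℝ}
    (hWb' : ∀ᵐ v ∂μI, ∀ᵐ u ∂μI, |W u v| ≤ 1)
    {x : ℝ → ℝ} (hx : Integrable x μI) :
    ∀ᵐ v ∂μI, ‖graphonOp W x v‖ ≤ ∫ u, ‖x u‖ ∂μI := by
  filter_upwards [hWb'] with v hv
  rw [graphonOp_eq]
  refine (norm_integral_le_integral_norm _).trans ?_
  refine integral_mono_of_nonneg (Filter.Eventually.of_forall fun u => norm_nonneg _)
    hx.norm ?_
  filter_upwards [hv] with u hu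
  simp only [norm_mul, Real.norm_eq_abs]
  calc |W u v| * |x u| ≤ 1 * |x u| := by
        exact mul_le_mul_of_nonneg_right hu (abs_nonneg _)
    _ = |x u| := one_mul _

lemma graphonOp_memLp {p : ℝ≥0∞} (hp : 1 ≤ p) {W : ℝ → ℝ → ℝ}
    (hWm : Measurable (Function.uncurry W))
    (hWb' : ∀ᵐ v ∂μI, ∀ᵐ u ∂μI, |W u v| ≤ 1)
    {x : ℝ → ℝ} (hx : MemLp x p μI) :
    MemLp (graphonOp W x) p μI ∧ eLpNorm (graphonOp W x) p μI ≤ eLpNorm x p μI := by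
  have hxi : Integrable x μI := hx.integrable hp
  have hb := graphonOp_ae_bound hWb' hxi
  have hsm := graphonOp_aesm hWm hx.aestronglyMeasurable
  have hle : eLpNorm (graphonOp W x) p μI ≤ ENNReal.ofReal (∫ u, ‖x u‖ ∂μI) := by
    simpa [measure_univ] using eLpNorm_le_of_ae_bound (μ := μI) (p := p) hb
  have h1 : ENNReal.ofReal (∫ u, ‖x u‖ ∂μI) = eLpNorm x 1 μI := by
    rw [ofReal_integral_norm_eq_lintegral_enorm hxi, eLpNorm_one_eq_lintegral_enorm]
  have hle2 : eLpNorm (graphonOp W x) p μI ≤ eLpNorm x p μI := by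
    refine hle.trans ?_
    rw [h1]
    exact eLpNorm_le_eLpNorm_of_exponent_le hp hx.aestronglyMeasurable
  exact ⟨⟨hsm, lt_of_le_of_lt hle2 hx.2⟩, hle2⟩

lemma graphonIter_memLp {p : ℝ≥0∞} (hp : 1 ≤ p) {W : ℝ → ℝ → ℝ}
    (hWm : Measurable (Function.uncurry W))
    (hWb' : ∀ᵐ v ∂μI, ∀ᵐ u ∂μI, |W u v| ≤ 1)
    {x : ℝ → ℝ} (hx : MemLp x p μI) (k : ℕ) :
    MemLp (graphonIter W k x) p μI ∧
      eLpNorm (graphonIter W k x) p μI ≤ eLpNorm x p μI := by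
  induction k with
  | zero => exact ⟨hx, le_rfl⟩
  | succ n ih =>
    have hstep : graphonIter W (n + 1) x = graphonOp W (graphonIter W n x) :=
      Function.iterate_succ_apply' _ _ _
    rw [hstep]
    obtain ⟨h1, h2⟩ := graphonOp_memLp hp hWm hWb' ih.1
    exact ⟨h1, h2.trans ih.2⟩

end AuxGNN
/-- **Single-layer norm estimate.**
For a normalized Lipschitz activation, a kernel with `|W| ≤ 1` a.e., and filter coefficients
bounded by `h̄`, a single graphon-convolutional layer satisfies
`‖Y‖_{L^p(I;ℝ^F)} ≤ F K h̄ ‖X‖_{L^p(I;ℝ^F)}`. -/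
theorem gnnLayer_norm_bound
    (F K : ℕ) (hF : 1 ≤ F) (hK : 1 ≤ K)
    (p : ℝ≥0∞) (hp : 1 ≤ p)
    (ρ : ℝ → ℝ) (hρ : NormalizedLipschitz ρ)
    (W : ℝ → ℝ → ℝ) (hWm : Measurable (Function.uncurry W))
    (hWb : ∀ᵐ q ∂μI2, |Function.uncurry W q| ≤ 1)
    (h : Fin F → Fin F → Fin K → ℝ) (hbar : ℝ)
    (hh : ∀ f g k, |h f g k| ≤ hbar)
    (X : Fin F → ℝ → ℝ) (hX : ∀ g, MemLp (X g) p μI) :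
    vecLpNorm F p (gnnLayer F K W ρ h X) ≤ (F : ℝ) * K * hbar * vecLpNorm F p X := by
  classical
  have hbar0 : 0 ≤ hbar := (abs_nonneg _).trans (hh ⟨0, hF⟩ ⟨0, hF⟩ ⟨0, hK⟩)
  -- rearrange the a.e. bound on W
  have hprod : ∀ᵐ q : ℝ × ℝ ∂(μI.prod μI), |W q.1 q.2| ≤ 1 := by
    rw [← μI2_eq_prod]; exact hWb
  have hswap : ∀ᵐ q : ℝ × ℝ ∂(μI.prod μI), |W q.2 q.1| ≤ 1 :=
    (Measure.measurePreserving_swap (μ := μI) (ν := μI)).quasiMeasurePreserving.ae hprod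
  have hWb' : ∀ᵐ v ∂μI, ∀ᵐ u ∂μI, |W u v| ≤ 1 := Measure.ae_ae_of_ae_prod hswap
  -- facts about iterates
  have hiter := fun (g : Fin F) (k : ℕ) => graphonIter_memLp hp hWm hWb' (hX g) k
  -- ρ bound
  have hρle : ∀ s : ℝ, |ρ s| ≤ |s| := fun s => by
    have := hρ.1 s 0; rwa [hρ.2, sub_zero, sub_zero] at this
  have hρcont : Continuous ρ := by
    refine (LipschitzWith.of_dist_le_mul (K := 1) fun x y => ?_).continuous
    simpa [Real.dist_eq, NNReal.coe_one, one_mul] using hρ.1 x y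
  -- the dominating sum of functions, indexed by (g, k)
  set G : Fin F → (Fin F × Fin K) → ℝ → ℝ :=
    fun f gk u => |h f gk.1 gk.2| * |graphonIter W (gk.2 : ℕ) (X gk.1) u| with hG
  have hGsm : ∀ f gk, AEStronglyMeasurable (G f gk) μI := by
    intro f gk
    exact aestronglyMeasurable_const.mul (hiter gk.1 gk.2).1.aestronglyMeasurable.norm
  -- pointwise bound
  have hpt : ∀ f u, ‖gnnLayer F K W ρ h X f u‖ ≤ ‖(∑ gk : Fin F × Fin K, G f gk) u‖ := by
    intro f u
    have h1 : |gnnLayer F K W ρ h X f u| ≤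
        |∑ g : Fin F, ∑ k : Fin K, h f g k * graphonIter W (k : ℕ) (X g) u| :=
      hρle _
    refine (h1.trans ?_).trans (le_abs_self _)
    rw [← Finset.sum_product']
    refine (Finset.abs_sum_le_sum_abs _ _).trans ?_
    rw [Finset.sum_apply]
    apply Finset.sum_le_sum
    intro gk _
    rw [hG, abs_mul]
  -- eLpNorm bound for each feature
  have key : ∀ f, eLpNorm (gnnLayer F K W ρ h X f) p μI ≤
      ∑ gk : Fin F × Fin K, ENNReal.ofReal hbar * eLpNorm (X gk.1) p μI := by
    intro f
    calc eLpNorm (gnnLayer F K W ρ h X f) p μI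
        ≤ eLpNorm (∑ gk : Fin F × Fin K, G f gk) p μI := eLpNorm_mono (hpt f)
      _ ≤ ∑ gk : Fin F × Fin K, eLpNorm (G f gk) p μI :=
          eLpNorm_sum_le (fun gk _ => hGsm f gk) hp
      _ ≤ ∑ gk : Fin F × Fin K, ENNReal.ofReal hbar * eLpNorm (X gk.1) p μI := by
          apply Finset.sum_le_sum
          intro gk _
          have e0 : G f gk =
              (|h f gk.1 gk.2|) • (fun u => |graphonIter W (gk.2 : ℕ) (X gk.1) u|) := rfl
          rw [e0, eLpNorm_const_smul]
          have e2 : eLpNorm (fun u => |graphonIter W (gk.2 : ℕ) (X gk.1) u|) p μI =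
              eLpNorm (graphonIter W (gk.2 : ℕ) (X gk.1)) p μI := by
            simpa [Real.norm_eq_abs] using
              eLpNorm_norm (μ := μI) (p := p) (graphonIter W (gk.2 : ℕ) (X gk.1))
          rw [e2]
          refine mul_le_mul ?_ (hiter gk.1 gk.2).2 zero_le zero_le
          rw [Real.enorm_eq_ofReal_abs]
          apply ENNReal.ofReal_le_ofReal
          simpa [Real.norm_eq_abs, abs_abs] using hh f gk.1 gk.2
  -- pass to real numbers
  set a : Fin F → ℝ := fun f => (eLpNorm (gnnLayer F K W ρ h X f) p μI).toReal with ha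
  set b : Fin F → ℝ := fun g => (eLpNorm (X g) p μI).toReal with hb
  have hbnn : ∀ g, 0 ≤ b g := fun g => ENNReal.toReal_nonneg
  have hann : ∀ f, 0 ≤ a f := fun f => ENNReal.toReal_nonneg
  set S : ℝ := ∑ g : Fin F, b g with hS
  have hSnn : 0 ≤ S := Finset.sum_nonneg fun g _ => hbnn g
  have haK : ∀ f, a f ≤ (K : ℝ) * hbar * S := by
    intro f
    have hfin : ∀ gk ∈ (Finset.univ : Finset (Fin F × Fin K)),
        ENNReal.ofReal hbar * eLpNorm (X gk.1) p μI ≠ ∞ :=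
      fun gk _ => ENNReal.mul_ne_top ENNReal.ofReal_ne_top (hX gk.1).2.ne
    have hsum_ne : (∑ gk : Fin F × Fin K, ENNReal.ofReal hbar * eLpNorm (X gk.1) p μI) ≠ ∞ :=
      (ENNReal.sum_lt_top.mpr fun gk hgk => lt_top_iff_ne_top.mpr (hfin gk hgk)).ne
    have h1 : a f ≤ (∑ gk : Fin F × Fin K, ENNReal.ofReal hbar * eLpNorm (X gk.1) p μI).toReal :=
      ENNReal.toReal_mono hsum_ne (key f)
    refine h1.trans_eq ?_
    rw [ENNReal.toReal_sum hfin]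
    have : ∀ gk : Fin F × Fin K,
        (ENNReal.ofReal hbar * eLpNorm (X gk.1) p μI).toReal = hbar * b gk.1 := by
      intro gk
      rw [ENNReal.toReal_mul, ENNReal.toReal_ofReal hbar0]
    simp only [this]
    rw [Fintype.sum_prod_type, hS, Finset.mul_sum]
    simp [Finset.sum_const, mul_comm, mul_assoc, mul_left_comm]
  -- final arithmetic
  have hCS : S ≤ Real.sqrt F * Real.sqrt (∑ g : Fin F, b g ^ 2) := by
    have h2 : S ^ 2 ≤ (F : ℝ) * ∑ g : Fin F, b g ^ 2 := by
      simpa using sq_sum_le_card_mul_sum_sq (s := (Finset.univ : Finset (Fin F))) (f := b)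
    calc S = Real.sqrt (S ^ 2) := (Real.sqrt_sq hSnn).symm
      _ ≤ Real.sqrt ((F : ℝ) * ∑ g : Fin F, b g ^ 2) := Real.sqrt_le_sqrt h2
      _ = Real.sqrt F * Real.sqrt (∑ g : Fin F, b g ^ 2) :=
          Real.sqrt_mul (Nat.cast_nonneg F) _
  have step1 : vecLpNorm F p (gnnLayer F K W ρ h X) ≤
      Real.sqrt F * ((K : ℝ) * hbar * S) := by
    have hCnn : 0 ≤ (K : ℝ) * hbar * S := by positivity
    have hsum : ∑ f : Fin F, a f ^ 2 ≤ (F : ℝ) * ((K : ℝ) * hbar * S) ^ 2 := by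
      calc ∑ f : Fin F, a f ^ 2 ≤ ∑ f : Fin F, ((K : ℝ) * hbar * S) ^ 2 :=
            Finset.sum_le_sum fun f _ => pow_le_pow_left₀ (hann f) (haK f) 2
        _ = (F : ℝ) * ((K : ℝ) * hbar * S) ^ 2 := by
            simp [Finset.sum_const, mul_comm]
    show Real.sqrt (∑ f : Fin F, a f ^ 2) ≤ _
    calc Real.sqrt (∑ f : Fin F, a f ^ 2)
          ≤ Real.sqrt ((F : ℝ) * ((K : ℝ) * hbar * S) ^ 2) := Real.sqrt_le_sqrt hsum
        _ = Real.sqrt F * ((K : ℝ) * hbar * S) := by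
            rw [Real.sqrt_mul (Nat.cast_nonneg F), Real.sqrt_sq hCnn]
  refine step1.trans ?_
  show _ ≤ (F : ℝ) * K * hbar * Real.sqrt (∑ g : Fin F, b g ^ 2)
  calc Real.sqrt F * ((K : ℝ) * hbar * S)
      ≤ Real.sqrt F * ((K : ℝ) * hbar * (Real.sqrt F * Real.sqrt (∑ g : Fin F, b g ^ 2))) := by
        have : 0 ≤ Real.sqrt F := Real.sqrt_nonneg _
        gcongr
    _ = (Real.sqrt F * Real.sqrt F) * ((K : ℝ) * hbar * Real.sqrt (∑ g : Fin F, b g ^ 2)) := by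
        ring
    _ = (F : ℝ) * K * hbar * Real.sqrt (∑ g : Fin F, b g ^ 2) := by
        rw [Real.mul_self_sqrt (Nat.cast_nonneg F)]; ring
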